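/- For every (c,a) ∈ K^{d-1} and every z ∈ K one has both: (i) d^{-1}·h_{c,a,v}(P_{c,a}(z)) ≥ h_{c,a,v}(z) + min{ (1/d)·log(|d|_v^{-1}), (1/d − 1)·log C̃_v(c,a) }, and (ii) d^{-1}·h_{c,a,v}(P_{c,a}(z)) ≤ h_{c,a,v}(z) + (1/d)·log α_v. -/

import Mathlib

open Filter

noncomputable section

variable {K : Type*} [Field K]

/-- Elementary symmetric polynomial of degree `k` evaluated at `c = (c_1, …, c_{d-2})`. -/
def esymmK {n : ℕ} (c : Fin n → K) (k : ℕ) : K :=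
  ∑ s ∈ Finset.powersetCard k (Finset.univ : Finset (Fin n)), ∏ i ∈ s, c i

/-- The polynomial `P_{c,a}` of degree `d = n + 2`:
`P_{c,a}(z) = z^d/d + ∑_{j=2}^{d-1} (-1)^{d-j} σ_{d-j}(c) z^j / j + a^d`. -/
def Pca {n : ℕ} (c : Fin n → K) (a z : K) : K :=
  z ^ (n + 2) / ((n + 2 : ℕ) : K)
    + ∑ j ∈ Finset.Icc 2 (n + 1),
        ((-1 : K) ^ (n + 2 - j) * esymmK c (n + 2 - j) * z ^ j) / ((j : ℕ) : K)
    + a ^ (n + 2)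

/-- The critical points `c_0 = 0, c_1, …, c_{d-2}` of `P_{c,a}`. -/
def crit {n : ℕ} (c : Fin n → K) (i : Fin (n + 1)) : K :=
  if h : (i : ℕ) = 0 then 0 else c ⟨(i : ℕ) - 1, by have := i.isLt; omega⟩

/-- `|c|_v = max_{1 ≤ i ≤ d-2} |c_i|_v` (with value `0` when there are no `c_i`'s). -/
def cnorm {n : ℕ} (v : AbsoluteValue K ℝ) (c : Fin n → K) : ℝ :=
  Finset.fold max 0 (fun i => v (c i)) (Finset.univ : Finset (Fin n))

/-- `α_v = max_{1 ≤ j ≤ d} |j|_v⁻¹`. -/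
def alphaV (v : AbsoluteValue K ℝ) (d : ℕ) : ℝ :=
  Finset.fold max 0 (fun j : ℕ => (v ((j : ℕ) : K))⁻¹) (Finset.Icc 1 d)

/-- `C_v(c,a) = max{ |d|_v^{1/(d-1)}, |d|_v^{1/d}·|a|_v,
max_{2≤j≤d-1} (|σ_{d-j}(c)|_v · |d/j|_v)^{1/(d-j)} }`, with `d = n + 2`. -/
def Cv {n : ℕ} (v : AbsoluteValue K ℝ) (c : Fin n → K) (a : K) : ℝ :=
  max ((v (((n + 2 : ℕ) : K))) ^ ((1 : ℝ) / ((n : ℝ) + 1)))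
    (max ((v (((n + 2 : ℕ) : K))) ^ ((1 : ℝ) / ((n : ℝ) + 2)) * v a)
      (Finset.fold max 0
        (fun j : ℕ =>
          (v (esymmK c (n + 2 - j)) * v (((n + 2 : ℕ) : K) / ((j : ℕ) : K)))
            ^ ((1 : ℝ) / ((n + 2 - j : ℕ) : ℝ)))
        (Finset.Icc 2 (n + 1))))

/-- `C̃_v(c,a) = max{ |a|_v, |c|_v, C_v(c,a) }`. -/
def Ctilde {n : ℕ} (v : AbsoluteValue K ℝ) (c : Fin n → K) (a : K) : ℝ :=
  max (v a) (max (cnorm v c) (Cv v c a))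

/-- `h_{c,a,v}(z) = log max{ C̃_v(c,a), |z|_v }`. -/
def hca {n : ℕ} (v : AbsoluteValue K ℝ) (c : Fin n → K) (a : K) (z : K) : ℝ :=
  Real.log (max (Ctilde v c a) (v z))

/-- `log⁺ = max{0, log}`. -/
def logPlus (x : ℝ) : ℝ := max 0 (Real.log x)

/-- `U_i(ε, C) = {(c,a) : max{|c|_v,|a|_v} ≥ C and |P_{c,a}(c_i)|_v ≥ ε·max{|c|_v,|a|_v}^d}`. -/
def Uset {n : ℕ} (v : AbsoluteValue K ℝ) (i : Fin (n + 1)) (ε C : ℝ) :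
    Set ((Fin n → K) × K) :=
  {p | C ≤ max (cnorm v p.1) (v p.2) ∧
       ε * max (cnorm v p.1) (v p.2) ^ (n + 2) ≤ v (Pca p.1 p.2 (crit p.1 i))}

/-- Ultrametric bound for finite sums. -/
lemma ultra_sum (v : AbsoluteValue K ℝ)
    (hv : ∀ x y : K, v (x + y) ≤ max (v x) (v y))
    {ι : Type*} (s : Finset ι) (f : ι → K) {B : ℝ} (hB : 0 ≤ B)
    (h : ∀ i ∈ s, v (f i) ≤ B) : v (∑ i ∈ s, f i) ≤ B := by
  classical
  induction s using Finset.cons_induction with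
  | empty => simpa using hB
  | cons i s hi ih =>
    rw [Finset.sum_cons]
    exact le_trans (hv _ _) (max_le (h i (Finset.mem_cons_self i s))
      (ih fun j hj => h j (Finset.mem_cons_of_mem hj)))

/-- If `v y < v x`, then `v (x + y) ≥ v x`. -/
lemma ultra_dom (v : AbsoluteValue K ℝ)
    (hv : ∀ x y : K, v (x + y) ≤ max (v x) (v y))
    {x y : K} (h : v y < v x) : v x ≤ v (x + y) := by
  by_contra hc
  push_neg at hc
  have h2 : v x ≤ max (v (x + y)) (v y) := by
    have := hv (x + y) (-y)
    rwa [add_neg_cancel_right, v.map_neg] at this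
  exact absurd h2 (not_le.mpr (max_lt hc h))

lemma rpow_collapse (x : ℝ) (k : ℕ) (hx : 0 ≤ x) (hk : k ≠ 0) :
    (x ^ ((1 : ℝ) / (k : ℝ))) ^ k = x := by
  rw [← Real.rpow_natCast (x ^ ((1 : ℝ) / (k : ℝ))) k, ← Real.rpow_mul hx, one_div,
    inv_mul_cancel₀ (Nat.cast_ne_zero.mpr hk : (k : ℝ) ≠ 0), Real.rpow_one]

/-- for every `(c,a)` and `z`,
`(1/d)·h_{c,a,v}(P_{c,a}(z)) ≥ h_{c,a,v}(z) + min{ (1/d)·log(|d|_v⁻¹), (1/d − 1)·log C̃_v(c,a) }`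
and `(1/d)·h_{c,a,v}(P_{c,a}(z)) ≤ h_{c,a,v}(z) + (1/d)·log α_v`, with `d = n + 2`. -/
theorem statement3 {K : Type*} [Field K] [IsAlgClosed K] [CharZero K]
    (v : AbsoluteValue K ℝ) (hv : ∀ x y : K, v (x + y) ≤ max (v x) (v y))
    (n : ℕ) (c : Fin n → K) (a : K) (z : K) :
    hca v c a (Pca c a z) / ((n : ℝ) + 2)
        ≥ hca v c a z
          + min ((1 / ((n : ℝ) + 2)) * Real.log ((v (((n + 2 : ℕ) : K)))⁻¹))
              ((1 / ((n : ℝ) + 2) - 1) * Real.log (Ctilde v c a)) ∧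
    hca v c a (Pca c a z) / ((n : ℝ) + 2)
        ≤ hca v c a z + (1 / ((n : ℝ) + 2)) * Real.log (alphaV v (n + 2)) := by
  classical
  simp only [hca]
  set Ct := Ctilde v c a with hCtdef
  set A := alphaV v (n + 2) with hAdef
  have hdK : ((n + 2 : ℕ) : K) ≠ 0 := Nat.cast_ne_zero.mpr (by omega)
  set D := v ((n + 2 : ℕ) : K) with hDdef
  have hDpos : 0 < D := v.pos hdK
  have hCv_le : Cv v c a ≤ Ct := by
    rw [hCtdef, Ctilde]; exact le_trans (le_max_right _ _) (le_max_right _ _)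
  have hcn_le : cnorm v c ≤ Ct := by
    rw [hCtdef, Ctilde]; exact le_trans (le_max_left _ _) (le_max_right _ _)
  have ha_le : v a ≤ Ct := by rw [hCtdef, Ctilde]; exact le_max_left _ _
  have hCtpos : 0 < Ct := by
    have h1 : D ^ ((1 : ℝ) / ((n : ℝ) + 1)) ≤ Cv v c a := le_max_left _ _
    calc (0 : ℝ) < D ^ ((1 : ℝ) / ((n : ℝ) + 1)) := Real.rpow_pos_of_pos hDpos _
    _ ≤ Ct := h1.trans hCv_le
  have hCtnn : 0 ≤ Ct := hCtpos.le
  -- key consequences of the definition of `Cv`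
  have hL2 : D ≤ Ct ^ (n + 1) := by
    have h1 : D ^ ((1 : ℝ) / ((n : ℝ) + 1)) ≤ Ct := (le_max_left _ _).trans hCv_le
    have h2 := pow_le_pow_left₀ (Real.rpow_nonneg hDpos.le _) h1 (n + 1)
    rwa [show ((n : ℝ) + 1) = ((n + 1 : ℕ) : ℝ) by push_cast; ring,
      rpow_collapse D (n + 1) hDpos.le (by omega)] at h2
  have hL3 : D * v a ^ (n + 2) ≤ Ct ^ (n + 2) := by
    have h1 : D ^ ((1 : ℝ) / ((n : ℝ) + 2)) * v a ≤ Ct :=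
      ((le_max_left _ _).trans (le_max_right _ _)).trans hCv_le
    have h2 := pow_le_pow_left₀ (mul_nonneg (Real.rpow_nonneg hDpos.le _) (v.nonneg a)) h1 (n + 2)
    rwa [mul_pow, show ((n : ℝ) + 2) = ((n + 2 : ℕ) : ℝ) by push_cast; ring,
      rpow_collapse D (n + 2) hDpos.le (by omega)] at h2
  have hL4 : ∀ j ∈ Finset.Icc 2 (n + 1),
      v (esymmK c (n + 2 - j)) * (D / v ((j : ℕ) : K)) ≤ Ct ^ (n + 2 - j) := by
    intro j hj
    simp only [Finset.mem_Icc] at hj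
    have hbase : (0 : ℝ) ≤ v (esymmK c (n + 2 - j)) * v (((n + 2 : ℕ) : K) / ((j : ℕ) : K)) :=
      mul_nonneg (v.nonneg _) (v.nonneg _)
    have hfold : (v (esymmK c (n + 2 - j)) * v (((n + 2 : ℕ) : K) / ((j : ℕ) : K)))
        ^ ((1 : ℝ) / ((n + 2 - j : ℕ) : ℝ)) ≤ Ct := by
      refine le_trans ?_ (((le_max_right _ _).trans (le_max_right _ _)).trans hCv_le)
      exact (Finset.le_fold_max _).mpr (Or.inr ⟨j, by simp [Finset.mem_Icc]; omega, le_refl _⟩)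
    have h2 := pow_le_pow_left₀ (Real.rpow_nonneg hbase _) hfold (n + 2 - j)
    rw [rpow_collapse _ (n + 2 - j) hbase (by omega), map_div₀] at h2
    calc v (esymmK c (n + 2 - j)) * (D / v ((j : ℕ) : K))
        = v (esymmK c (n + 2 - j)) * (v ((n + 2 : ℕ) : K) / v ((j : ℕ) : K)) := by rw [hDdef]
    _ ≤ Ct ^ (n + 2 - j) := h2
  have hc_le : ∀ i, v (c i) ≤ Ct := fun i => by
    refine le_trans ?_ hcn_le
    rw [cnorm]
    exact (Finset.le_fold_max _).mpr (Or.inr ⟨i, Finset.mem_univ i, le_refl _⟩)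
  have hL5 : ∀ k : ℕ, v (esymmK c k) ≤ Ct ^ k := by
    intro k
    refine ultra_sum v hv _ _ (pow_nonneg hCtnn k) ?_
    intro s hs
    rw [Finset.mem_powersetCard] at hs
    calc v (∏ i ∈ s, c i) = ∏ i ∈ s, v (c i) := map_prod v _ s
    _ ≤ ∏ _i ∈ s, Ct := Finset.prod_le_prod (fun i _ => v.nonneg _) (fun i _ => hc_le i)
    _ = Ct ^ k := by rw [Finset.prod_const, hs.2]
  -- facts about alphaV
  have hAj : ∀ j ∈ Finset.Icc 1 (n + 2), (v ((j : ℕ) : K))⁻¹ ≤ A := by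
    intro j hj
    rw [hAdef, alphaV]
    exact (Finset.le_fold_max _).mpr (Or.inr ⟨j, hj, le_refl _⟩)
  have hA1 : (1 : ℝ) ≤ A := by
    have := hAj 1 (by simp)
    simpa using this
  have hApos : 0 < A := lt_of_lt_of_le one_pos hA1
  have hAD : D⁻¹ ≤ A := hAj (n + 2) (by simp [Finset.mem_Icc])
  -- abbreviations
  set M := max Ct (v z) with hMdef
  have hCtM : Ct ≤ M := le_max_left _ _
  have hMpos : 0 < M := lt_of_lt_of_le hCtpos hCtM
  have hvzM : v z ≤ M := le_max_right _ _
  have hvx0 : v (z ^ (n + 2) / ((n + 2 : ℕ) : K)) = v z ^ (n + 2) / D := by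
    rw [map_div₀, map_pow, hDdef]
  have hterm : ∀ j : ℕ, v (((-1 : K) ^ (n + 2 - j) * esymmK c (n + 2 - j) * z ^ j) / ((j : ℕ) : K))
      = v (esymmK c (n + 2 - j)) * v z ^ j / v ((j : ℕ) : K) := by
    intro j
    rw [map_div₀, map_mul, map_mul, map_pow, map_pow, v.map_neg, map_one, one_pow, one_mul]
  have hvj : ∀ j : ℕ, 1 ≤ j → 0 < v ((j : ℕ) : K) := fun j hj =>
    v.pos (Nat.cast_ne_zero.mpr (by omega))
  -- upper bound : v (Pca c a z) ≤ M^(n+2) * A, and Ct ≤ M^(n+2) * A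
  have hMA_nn : (0 : ℝ) ≤ M ^ (n + 2) * A := by positivity
  have hCt_le_MA : Ct ≤ M ^ (n + 2) * A := by
    have h1 : Ct * D ≤ M ^ (n + 2) := by
      calc Ct * D ≤ M * M ^ (n + 1) :=
            mul_le_mul hCtM (hL2.trans (pow_le_pow_left₀ hCtnn hCtM (n + 1))) hDpos.le hMpos.le
      _ = M ^ (n + 2) := by ring
    calc Ct = Ct * D * D⁻¹ := by field_simp
    _ ≤ M ^ (n + 2) * A := mul_le_mul h1 hAD (inv_nonneg.mpr hDpos.le) (pow_nonneg hMpos.le _)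
  have hub : v (Pca c a z) ≤ M ^ (n + 2) * A := by
    unfold Pca
    refine le_trans (hv _ _) (max_le (le_trans (hv _ _) (max_le ?_ ?_)) ?_)
    · rw [hvx0]
      calc v z ^ (n + 2) / D ≤ M ^ (n + 2) * D⁻¹ := by
            rw [div_eq_mul_inv]
            exact mul_le_mul_of_nonneg_right (pow_le_pow_left₀ (v.nonneg z) hvzM _)
              (inv_nonneg.mpr hDpos.le)
      _ ≤ M ^ (n + 2) * A := mul_le_mul_of_nonneg_left hAD (pow_nonneg hMpos.le _)
    · refine ultra_sum v hv _ _ hMA_nn ?_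
      intro j hj
      simp only [Finset.mem_Icc] at hj
      rw [hterm j]
      have hvjpos := hvj j (by omega)
      have hexp : n + 2 - j + j = n + 2 := by omega
      calc v (esymmK c (n + 2 - j)) * v z ^ j / v ((j : ℕ) : K)
          ≤ Ct ^ (n + 2 - j) * M ^ j * (v ((j : ℕ) : K))⁻¹ := by
            rw [div_eq_mul_inv]
            exact mul_le_mul_of_nonneg_right
              (mul_le_mul (hL5 _) (pow_le_pow_left₀ (v.nonneg z) hvzM j)
                (pow_nonneg (v.nonneg z) j) (pow_nonneg hCtnn _))
              (inv_nonneg.mpr hvjpos.le)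
      _ ≤ M ^ (n + 2 - j) * M ^ j * A :=
            mul_le_mul
              (mul_le_mul_of_nonneg_right (pow_le_pow_left₀ hCtnn hCtM _) (pow_nonneg hMpos.le _))
              (hAj j (by simp [Finset.mem_Icc]; omega)) (inv_nonneg.mpr hvjpos.le)
              (mul_nonneg (pow_nonneg hMpos.le _) (pow_nonneg hMpos.le _))
      _ = M ^ (n + 2) * A := by rw [← pow_add, hexp]
    · rw [map_pow]
      calc v a ^ (n + 2) ≤ Ct ^ (n + 2) := pow_le_pow_left₀ (v.nonneg a) ha_le _
      _ ≤ M ^ (n + 2) := pow_le_pow_left₀ hCtnn hCtM _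
      _ ≤ M ^ (n + 2) * A := le_mul_of_one_le_right (pow_nonneg hMpos.le _) hA1
  have hub' : max Ct (v (Pca c a z)) ≤ M ^ (n + 2) * A := max_le hCt_le_MA hub
  -- lower bound : M^(n+2) * min D⁻¹ (Ct^(n+1))⁻¹ ≤ max Ct (v (Pca c a z))
  have hminpos : 0 < min D⁻¹ ((Ct ^ (n + 1))⁻¹) :=
    lt_min (inv_pos.mpr hDpos) (inv_pos.mpr (pow_pos hCtpos _))
  have hlb : M ^ (n + 2) * min D⁻¹ ((Ct ^ (n + 1))⁻¹) ≤ max Ct (v (Pca c a z)) := by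
    rcases le_or_gt (v z) Ct with hcase | hcase
    · have hM : M = Ct := max_eq_left hcase
      calc M ^ (n + 2) * min D⁻¹ ((Ct ^ (n + 1))⁻¹) ≤ Ct ^ (n + 2) * (Ct ^ (n + 1))⁻¹ := by
            rw [hM]
            exact mul_le_mul_of_nonneg_left (min_le_right _ _) (pow_nonneg hCtnn _)
      _ = Ct := by
            rw [pow_succ, mul_comm (Ct ^ (n + 1)) Ct, mul_assoc,
              mul_inv_cancel₀ (pow_ne_zero _ hCtpos.ne'), mul_one]
      _ ≤ max Ct (v (Pca c a z)) := le_max_left _ _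
    · have hM : M = v z := max_eq_right hcase.le
      have hvzpos : 0 < v z := hCtpos.trans hcase
      have hB0nn : (0 : ℝ) ≤ Ct * v z ^ (n + 1) / D := by positivity
      have hSb : v (∑ j ∈ Finset.Icc 2 (n + 1),
          ((-1 : K) ^ (n + 2 - j) * esymmK c (n + 2 - j) * z ^ j) / ((j : ℕ) : K))
          ≤ Ct * v z ^ (n + 1) / D := by
        refine ultra_sum v hv _ _ hB0nn ?_
        intro j hj
        simp only [Finset.mem_Icc] at hj
        rw [hterm j]
        have hvjpos := hvj j (by omega)
        have h1 : v (esymmK c (n + 2 - j)) / v ((j : ℕ) : K) ≤ Ct ^ (n + 2 - j) / D := by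
          rw [div_le_div_iff₀ hvjpos hDpos]
          have h0 := hL4 j (by simp [Finset.mem_Icc]; omega)
          calc v (esymmK c (n + 2 - j)) * D
              = v (esymmK c (n + 2 - j)) * (D / v ((j : ℕ) : K)) * v ((j : ℕ) : K) := by
                field_simp
          _ ≤ Ct ^ (n + 2 - j) * v ((j : ℕ) : K) := mul_le_mul_of_nonneg_right h0 hvjpos.le
        have h2 : Ct ^ (n + 2 - j) * v z ^ j ≤ Ct * v z ^ (n + 1) := by
          have hkey : Ct ^ (n + 1 - j) ≤ v z ^ (n + 1 - j) :=
            pow_le_pow_left₀ hCtnn hcase.le _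
          have he1 : n + 2 - j = (n + 1 - j) + 1 := by omega
          have he2 : n + 1 - j + j = n + 1 := by omega
          calc Ct ^ (n + 2 - j) * v z ^ j = Ct * (Ct ^ (n + 1 - j) * v z ^ j) := by
                rw [he1, pow_succ]; ring
          _ ≤ Ct * (v z ^ (n + 1 - j) * v z ^ j) :=
                mul_le_mul_of_nonneg_left
                  (mul_le_mul_of_nonneg_right hkey (pow_nonneg (v.nonneg z) j)) hCtnn
          _ = Ct * v z ^ (n + 1) := by rw [← pow_add, he2]
        calc v (esymmK c (n + 2 - j)) * v z ^ j / v ((j : ℕ) : K)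
            = v (esymmK c (n + 2 - j)) / v ((j : ℕ) : K) * v z ^ j := by ring
        _ ≤ Ct ^ (n + 2 - j) / D * v z ^ j :=
              mul_le_mul_of_nonneg_right h1 (pow_nonneg (v.nonneg z) j)
        _ = Ct ^ (n + 2 - j) * v z ^ j / D := by ring
        _ ≤ Ct * v z ^ (n + 1) / D := (div_le_div_iff_of_pos_right hDpos).mpr h2
      have haB : v (a ^ (n + 2)) ≤ Ct * v z ^ (n + 1) / D := by
        rw [map_pow]
        have h1 : v a ^ (n + 2) ≤ Ct ^ (n + 2) / D := by
          rw [le_div_iff₀ hDpos, mul_comm]; exact hL3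
        refine h1.trans ((div_le_div_iff_of_pos_right hDpos).mpr ?_)
        calc Ct ^ (n + 2) = Ct * Ct ^ (n + 1) := by rw [pow_succ]; ring
        _ ≤ Ct * v z ^ (n + 1) :=
              mul_le_mul_of_nonneg_left (pow_le_pow_left₀ hCtnn hcase.le _) hCtnn
      have hB0lt : Ct * v z ^ (n + 1) / D < v z ^ (n + 2) / D := by
        rw [div_lt_div_iff₀ hDpos hDpos]
        have h1 : Ct * v z ^ (n + 1) < v z * v z ^ (n + 1) :=
          mul_lt_mul_of_pos_right hcase (pow_pos hvzpos _)
        have h2 : v z * v z ^ (n + 1) = v z ^ (n + 2) := by rw [pow_succ]; ring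
        exact mul_lt_mul_of_pos_right (h2 ▸ h1) hDpos
      have hdom : v z ^ (n + 2) / D ≤ v (Pca c a z) := by
        have heq : Pca c a z = z ^ (n + 2) / ((n + 2 : ℕ) : K)
            + ((∑ j ∈ Finset.Icc 2 (n + 1),
                ((-1 : K) ^ (n + 2 - j) * esymmK c (n + 2 - j) * z ^ j) / ((j : ℕ) : K))
              + a ^ (n + 2)) := by
          unfold Pca; rw [add_assoc]
        rw [heq]
        have hy : v ((∑ j ∈ Finset.Icc 2 (n + 1),
            ((-1 : K) ^ (n + 2 - j) * esymmK c (n + 2 - j) * z ^ j) / ((j : ℕ) : K))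
            + a ^ (n + 2)) < v (z ^ (n + 2) / ((n + 2 : ℕ) : K)) := by
          rw [hvx0]
          exact lt_of_le_of_lt (le_trans (hv _ _) (max_le hSb haB)) hB0lt
        have := ultra_dom v hv hy
        rwa [hvx0] at this
      calc M ^ (n + 2) * min D⁻¹ ((Ct ^ (n + 1))⁻¹) ≤ v z ^ (n + 2) * D⁻¹ := by
            rw [hM]
            exact mul_le_mul_of_nonneg_left (min_le_left _ _) (pow_nonneg (v.nonneg z) _)
      _ = v z ^ (n + 2) / D := (div_eq_mul_inv _ _).symm
      _ ≤ v (Pca c a z) := hdom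
      _ ≤ max Ct (v (Pca c a z)) := le_max_right _ _
  -- now take logarithms
  have hMPpos : 0 < max Ct (v (Pca c a z)) := lt_of_lt_of_le hCtpos (le_max_left _ _)
  have hd2 : (0 : ℝ) < (n : ℝ) + 2 := by positivity
  have hlogmin : Real.log (min D⁻¹ ((Ct ^ (n + 1))⁻¹))
      = min (Real.log D⁻¹) (Real.log ((Ct ^ (n + 1))⁻¹)) := by
    rcases le_total (D⁻¹) ((Ct ^ (n + 1))⁻¹) with h | h
    · rw [min_eq_left h, min_eq_left (Real.log_le_log (inv_pos.mpr hDpos) h)]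
    · rw [min_eq_right h, min_eq_right (Real.log_le_log (inv_pos.mpr (pow_pos hCtpos _)) h)]
  have hp : (1 / ((n : ℝ) + 2)) * Real.log D⁻¹ = Real.log D⁻¹ / ((n : ℝ) + 2) := by ring
  have hq : (1 / ((n : ℝ) + 2) - 1) * Real.log Ct
      = Real.log ((Ct ^ (n + 1))⁻¹) / ((n : ℝ) + 2) := by
    rw [Real.log_inv, Real.log_pow]
    push_cast
    field_simp
    ring
  constructor
  · -- lower bound
    have hlog1 : ((n : ℝ) + 2) * Real.log M + Real.log (min D⁻¹ ((Ct ^ (n + 1))⁻¹))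
        ≤ Real.log (max Ct (v (Pca c a z))) := by
      have h0 : (0 : ℝ) < M ^ (n + 2) * min D⁻¹ ((Ct ^ (n + 1))⁻¹) := by positivity
      have := Real.log_le_log h0 hlb
      rw [Real.log_mul (by positivity) hminpos.ne', Real.log_pow] at this
      calc ((n : ℝ) + 2) * Real.log M + Real.log (min D⁻¹ ((Ct ^ (n + 1))⁻¹))
          = ((n + 2 : ℕ) : ℝ) * Real.log M + Real.log (min D⁻¹ ((Ct ^ (n + 1))⁻¹)) := by
            push_cast; ring
      _ ≤ Real.log (max Ct (v (Pca c a z))) := this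
    rw [ge_iff_le]
    have h2 : min ((1 / ((n : ℝ) + 2)) * Real.log D⁻¹)
        ((1 / ((n : ℝ) + 2) - 1) * Real.log Ct)
        = Real.log (min D⁻¹ ((Ct ^ (n + 1))⁻¹)) / ((n : ℝ) + 2) := by
      rw [hp, hq, min_div_div_right hd2.le, hlogmin]
    rw [h2]
    calc Real.log M + Real.log (min D⁻¹ ((Ct ^ (n + 1))⁻¹)) / ((n : ℝ) + 2)
        = (((n : ℝ) + 2) * Real.log M + Real.log (min D⁻¹ ((Ct ^ (n + 1))⁻¹))) / ((n : ℝ) + 2) := by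
          field_simp
    _ ≤ Real.log (max Ct (v (Pca c a z))) / ((n : ℝ) + 2) := (div_le_div_iff_of_pos_right hd2).mpr hlog1
  · -- upper bound
    have hlog2 : Real.log (max Ct (v (Pca c a z)))
        ≤ ((n : ℝ) + 2) * Real.log M + Real.log A := by
      have := Real.log_le_log hMPpos hub'
      rw [Real.log_mul (by positivity) hApos.ne', Real.log_pow] at this
      calc Real.log (max Ct (v (Pca c a z)))
          ≤ ((n + 2 : ℕ) : ℝ) * Real.log M + Real.log A := this
      _ = ((n : ℝ) + 2) * Real.log M + Real.log A := by push_cast; ring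
    calc Real.log (max Ct (v (Pca c a z))) / ((n : ℝ) + 2)
        ≤ (((n : ℝ) + 2) * Real.log M + Real.log A) / ((n : ℝ) + 2) :=
          (div_le_div_iff_of_pos_right hd2).mpr hlog2
    _ = Real.log M + (1 / ((n : ℝ) + 2)) * Real.log A := by field_simp
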